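/- arXiv:2303.08015 — 3 statements merged into one kernel-verified Lean document; each statement's English description precedes it below -/
import Mathlib

section
/- Let D, k, q, R₀ be positive real numbers. Then ∫₀^∞ q · ( erf(R₀/(2·√(D·t))) − (R₀/√(π·D·t)) · exp(−R₀²/(4·D·t)) ) · exp(−k·t) dt = (q/(D·k^{3/2})) · ( D·√k − √D · exp(−√(k/D)·R₀) · ( √(D·k) + k·R₀ ) ). -/
open MeasureTheory Real Set Filter Topology

/-- The Gauss error function `erf x = (2/√π) ∫₀ˣ exp(−u²) du`. -/
noncomputable def erf (x : ℝ) : ℝ :=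
  (2 / Real.sqrt π) * ∫ u in (0 : ℝ)..x, Real.exp (-u ^ 2)

lemma cont_g : Continuous (fun u : ℝ => Real.exp (-u ^ 2)) := by fun_prop

lemma hasDerivAt_erf (x : ℝ) :
    HasDerivAt erf (2 / Real.sqrt π * Real.exp (-x ^ 2)) x := by
  have h : HasDerivAt (fun y : ℝ => ∫ u in (0 : ℝ)..y, Real.exp (-u ^ 2))
      (Real.exp (-x ^ 2)) x :=
    intervalIntegral.integral_hasDerivAt_right (cont_g.intervalIntegrable 0 x)
      (cont_g.stronglyMeasurableAtFilter _ _) cont_g.continuousAt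
  exact h.const_mul (2 / Real.sqrt π)

lemma continuous_erf : Continuous erf :=
  continuous_iff_continuousAt.2 fun x => (hasDerivAt_erf x).continuousAt

lemma erf_zero : erf 0 = 0 := by simp [erf]

lemma erf_neg (x : ℝ) : erf (-x) = -erf x := by
  unfold erf
  have h : (∫ u in (-x:ℝ)..0, Real.exp (-u ^ 2)) = ∫ u in (0:ℝ)..x, Real.exp (-u ^ 2) := by
    have := intervalIntegral.integral_comp_neg (a := (0:ℝ)) (b := x)
      (fun u => Real.exp (-u ^ 2))
    simpa using this.symm
  rw [intervalIntegral.integral_symm (-x) 0, h]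
  ring

lemma tendsto_erf_atTop : Tendsto erf atTop (𝓝 1) := by
  have hi : IntegrableOn (fun u : ℝ => Real.exp (-u ^ 2)) (Ioi 0) := by
    have := (integrable_exp_neg_mul_sq (by norm_num : (0:ℝ) < 1)).integrableOn (s := Ioi 0)
    simpa using this
  have h := intervalIntegral_tendsto_integral_Ioi 0 hi tendsto_id
  have hv : ∫ u in Ioi (0:ℝ), Real.exp (-u ^ 2) = Real.sqrt π / 2 := by
    have := integral_gaussian_Ioi 1
    simpa using this
  rw [hv] at h
  have h2 := h.const_mul (2 / Real.sqrt π)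
  have hπ : Real.sqrt π ≠ 0 := (Real.sqrt_pos.2 pi_pos).ne'
  have : 2 / Real.sqrt π * (Real.sqrt π / 2) = 1 := by field_simp
  rw [this] at h2
  exact h2

lemma tendsto_erf_atBot : Tendsto erf atBot (𝓝 (-1)) := by
  have h := (tendsto_erf_atTop.comp tendsto_neg_atBot_atTop).neg
  simp only [Function.comp_def, erf_neg, neg_neg] at h
  simpa using h

lemma erf_lower (x : ℝ) (hx : 0 ≤ x) :
    2 / Real.sqrt π * x * Real.exp (-x ^ 2) ≤ erf x := by
  set h : ℝ → ℝ := fun y => erf y - 2 / Real.sqrt π * y * Real.exp (-y ^ 2) with hh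
  have hd : ∀ y : ℝ, HasDerivAt h (2 / Real.sqrt π * (2 * y ^ 2) * Real.exp (-y ^ 2)) y := by
    intro y
    have h1 : HasDerivAt (fun y : ℝ => 2 / Real.sqrt π * y * Real.exp (-y ^ 2))
        (2 / Real.sqrt π * Real.exp (-y ^ 2)
          + 2 / Real.sqrt π * y * (Real.exp (-y ^ 2) * (-(2 * y)))) y := by
      have he : HasDerivAt (fun y : ℝ => Real.exp (-y ^ 2)) (Real.exp (-y^2) * (-(2*y))) y := by
        have hp : HasDerivAt (fun y : ℝ => -y ^ 2) (-(2 * y)) y := by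
          simpa using (show HasDerivAt (fun x : ℝ => -(x ^ 2)) _ y from (hasDerivAt_pow 2 y).neg)
        exact (Real.hasDerivAt_exp _).comp y hp
      have hm : HasDerivAt (fun y : ℝ => 2 / Real.sqrt π * y) (2 / Real.sqrt π) y := by
        simpa using (hasDerivAt_id y).const_mul (2 / Real.sqrt π)
      simpa [mul_comm, mul_assoc, mul_left_comm] using
        (show HasDerivAt (fun y : ℝ => 2 / Real.sqrt π * y * Real.exp (-y ^ 2)) _ y from hm.mul he)
    have : HasDerivAt (fun y => erf y - 2 / Real.sqrt π * y * Real.exp (-y ^ 2)) _ y :=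
      (hasDerivAt_erf y).sub h1
    convert this using 1
    ring
  have hmono : MonotoneOn h (Ici 0) := by
    refine monotoneOn_of_deriv_nonneg (convex_Ici 0) ?_ ?_ ?_
    · exact (Continuous.continuousOn (by
        exact continuous_iff_continuousAt.2 fun y => (hd y).continuousAt))
    · exact fun y _ => ((hd y).differentiableAt).differentiableWithinAt
    · intro y _
      rw [(hd y).deriv]
      have hπ : (0:ℝ) < Real.sqrt π := Real.sqrt_pos.2 pi_pos
      positivity
  have h0 : h 0 = 0 := by simp [hh, erf_zero]
  have := hmono (self_mem_Ici) hx hx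
  rw [h0] at this
  simpa [hh, sub_nonneg] using this

set_option maxHeartbeats 2000000 in
/-- Theorem 2 of the paper: asymptotic channel response at a passive spherical
receiver whose center coincides with the continuously emitting point transmitter. -/
theorem passive_rx_self_channel_response (D k q R₀ : ℝ)
    (hD : 0 < D) (hk : 0 < k) (hq : 0 < q) (hR₀ : 0 < R₀) :
    ∫ t in Ioi (0 : ℝ),
        q * (erf (R₀ / (2 * Real.sqrt (D * t)))
              - R₀ / Real.sqrt (π * D * t) * Real.exp (-R₀ ^ 2 / (4 * D * t)))
          * Real.exp (-k * t)
      = q / (D * k ^ ((3 : ℝ) / 2)) *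
          (D * Real.sqrt k -
            Real.sqrt D * Real.exp (-Real.sqrt (k / D) * R₀) *
              (Real.sqrt (D * k) + k * R₀)) := by
  have hπ : (0:ℝ) < Real.sqrt π := Real.sqrt_pos.2 pi_pos
  have hsD : (0:ℝ) < Real.sqrt D := Real.sqrt_pos.2 hD
  have hsk : (0:ℝ) < Real.sqrt k := Real.sqrt_pos.2 hk
  set sD := Real.sqrt D with hsDdef
  set sk := Real.sqrt k with hskdef
  set a : ℝ := R₀ / (2 * sD) with hadef
  have ha : 0 < a := by positivity
  set c : ℝ := 2 * a * sk with hcdef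
  set A : ℝ := 1 / (2 * k) - a / sk with hAdef
  set B : ℝ := 1 / (2 * k) + a / sk with hBdef
  set G : ℝ → ℝ := fun t =>
    if t ≤ 0 then q * (-(1 / k) + A * Real.exp c + B * Real.exp (-c))
    else q * (-(1 / k) * Real.exp (-k * t) * erf (a / Real.sqrt t)
      + A * Real.exp c * erf (a / Real.sqrt t + sk * Real.sqrt t)
      + B * Real.exp (-c) * erf (a / Real.sqrt t - sk * Real.sqrt t)) with hGdef
  -- canonical form of the integrand
  have hident : ∀ t : ℝ, 0 < t →
      q * (erf (R₀ / (2 * Real.sqrt (D * t)))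
           - R₀ / Real.sqrt (π * D * t) * Real.exp (-R₀ ^ 2 / (4 * D * t)))
        * Real.exp (-k * t)
      = q * (erf (a / Real.sqrt t)
           - 2 / Real.sqrt π * (a / Real.sqrt t)
              * Real.exp (-(a / Real.sqrt t) ^ 2)) * Real.exp (-k * t) := by
    intro t ht
    have hst : (0:ℝ) < Real.sqrt t := Real.sqrt_pos.2 ht
    have h1 : Real.sqrt (D * t) = sD * Real.sqrt t := Real.sqrt_mul hD.le t
    have h2 : Real.sqrt (π * D * t) = Real.sqrt π * sD * Real.sqrt t := by
      rw [Real.sqrt_mul (by positivity) t, Real.sqrt_mul pi_pos.le D]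
    have hD2 : sD ^ 2 = D := Real.sq_sqrt hD.le
    have ht2 : Real.sqrt t ^ 2 = t := Real.sq_sqrt ht.le
    have harg : R₀ / (2 * Real.sqrt (D * t)) = a / Real.sqrt t := by
      rw [h1, ← mul_assoc, hadef, div_div]
    have hexp : -R₀ ^ 2 / (4 * D * t) = -(a / Real.sqrt t) ^ 2 := by
      rw [hadef, ← hD2, ← ht2]
      field_simp
      rw [Real.sqrt_sq hst.le]
      ring
    have hcoef : R₀ / Real.sqrt (π * D * t) = 2 / Real.sqrt π * (a / Real.sqrt t) := by
      rw [h2, hadef]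
      field_simp
    rw [harg, hexp, hcoef]
  -- derivative helper
  have key : ∀ (p b t : ℝ), 0 < t →
      HasDerivAt (fun t => p / Real.sqrt t + b * Real.sqrt t)
        (-(p / (2 * Real.sqrt t * t)) + b * (1 / (2 * Real.sqrt t))) t := by
    intro p b t ht
    have hst : (0:ℝ) < Real.sqrt t := Real.sqrt_pos.2 ht
    have hs := Real.hasDerivAt_sqrt (ne_of_gt ht)
    have hinv := hs.inv hst.ne'
    have h1 : HasDerivAt (fun t => p / Real.sqrt t)
        (p * (-(1 / (2 * Real.sqrt t)) / Real.sqrt t ^ 2)) t := by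
      simpa [div_eq_mul_inv, neg_div] using hinv.const_mul p
    have h2 := hs.const_mul b
    have h3 : HasDerivAt (fun t => p / Real.sqrt t + b * Real.sqrt t) _ t :=
      h1.add (by simpa [mul_comm] using h2 : HasDerivAt
      (fun t => b * Real.sqrt t) (b * (1 / (2 * Real.sqrt t))) t)
    convert h3 using 1
    rw [Real.sq_sqrt ht.le]
    field_simp
  have hderiv : ∀ t ∈ Ioi (0:ℝ), HasDerivAt G
      (q * (erf (R₀ / (2 * Real.sqrt (D * t)))
            - R₀ / Real.sqrt (π * D * t) * Real.exp (-R₀ ^ 2 / (4 * D * t)))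
         * Real.exp (-k * t)) t := by
    intro t ht
    rw [Set.mem_Ioi] at ht
    have hst : (0:ℝ) < Real.sqrt t := Real.sqrt_pos.2 ht
    have ht2 : Real.sqrt t ^ 2 = t := Real.sq_sqrt ht.le
    have hk2 : sk ^ 2 = k := Real.sq_sqrt hk.le
    have e1 : (a / Real.sqrt t) * (sk * Real.sqrt t) = a * sk := by
      field_simp
    have e2 : (sk * Real.sqrt t) ^ 2 = k * t := by rw [mul_pow, ht2, hk2]
    have h12 : -(a / Real.sqrt t + sk * Real.sqrt t) ^ 2
        = -c + (-(a / Real.sqrt t) ^ 2 + -k * t) := by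
      calc -(a / Real.sqrt t + sk * Real.sqrt t) ^ 2
          = -((a / Real.sqrt t) ^ 2 + 2 * ((a / Real.sqrt t) * (sk * Real.sqrt t))
              + (sk * Real.sqrt t) ^ 2) := by ring
        _ = -c + (-(a / Real.sqrt t) ^ 2 + -k * t) := by rw [e1, e2, hcdef]; ring
    have h13 : -(a / Real.sqrt t - sk * Real.sqrt t) ^ 2
        = c + (-(a / Real.sqrt t) ^ 2 + -k * t) := by
      calc -(a / Real.sqrt t - sk * Real.sqrt t) ^ 2
          = -((a / Real.sqrt t) ^ 2 - 2 * ((a / Real.sqrt t) * (sk * Real.sqrt t))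
              + (sk * Real.sqrt t) ^ 2) := by ring
        _ = c + (-(a / Real.sqrt t) ^ 2 + -k * t) := by rw [e1, e2, hcdef]; ring
    have hE1 : Real.exp (-(a / Real.sqrt t + sk * Real.sqrt t) ^ 2)
        = Real.exp (-c) * (Real.exp (-(a / Real.sqrt t) ^ 2) * Real.exp (-k * t)) := by
      rw [h12, Real.exp_add, Real.exp_add]
    have hE2 : Real.exp (-(a / Real.sqrt t - sk * Real.sqrt t) ^ 2)
        = Real.exp c * (Real.exp (-(a / Real.sqrt t) ^ 2) * Real.exp (-k * t)) := by
      rw [h13, Real.exp_add, Real.exp_add]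
    have d1 : HasDerivAt (fun t => a / Real.sqrt t) (-(a / (2 * Real.sqrt t * t))) t := by
      simpa using key a 0 t ht
    have d2 := key a sk t ht
    have d3 : HasDerivAt (fun t => a / Real.sqrt t - sk * Real.sqrt t)
        (-(a / (2 * Real.sqrt t * t)) + -sk * (1 / (2 * Real.sqrt t))) t := by
      simpa [sub_eq_add_neg, neg_mul] using key a (-sk) t ht
    have dexp : HasDerivAt (fun t : ℝ => Real.exp (-k * t)) (Real.exp (-k * t) * -k) t := by
      have h : HasDerivAt (fun t : ℝ => -k * t) (-k) t := by
        simpa using (hasDerivAt_id t).const_mul (-k)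
      exact (Real.hasDerivAt_exp _).comp t h
    have c1 : HasDerivAt (fun t => erf (a / Real.sqrt t))
        (2 / Real.sqrt π * Real.exp (-(a / Real.sqrt t) ^ 2)
          * -(a / (2 * Real.sqrt t * t))) t :=
      (hasDerivAt_erf _).comp t d1
    have c2 : HasDerivAt (fun t => erf (a / Real.sqrt t + sk * Real.sqrt t))
        (2 / Real.sqrt π * Real.exp (-(a / Real.sqrt t + sk * Real.sqrt t) ^ 2)
          * (-(a / (2 * Real.sqrt t * t)) + sk * (1 / (2 * Real.sqrt t)))) t :=
      (hasDerivAt_erf _).comp t d2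
    have c3 : HasDerivAt (fun t => erf (a / Real.sqrt t - sk * Real.sqrt t))
        (2 / Real.sqrt π * Real.exp (-(a / Real.sqrt t - sk * Real.sqrt t) ^ 2)
          * (-(a / (2 * Real.sqrt t * t)) + -sk * (1 / (2 * Real.sqrt t)))) t :=
      (hasDerivAt_erf _).comp t d3
    have term1 := (dexp.mul c1).const_mul (-(1/k))
    have term2 := c2.const_mul (A * Real.exp c)
    have term3 := c3.const_mul (B * Real.exp (-c))
    have final : HasDerivAt (fun t => q * ((-(1/k) * (Real.exp (-k * t) * erf (a / Real.sqrt t))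
        + A * Real.exp c * erf (a / Real.sqrt t + sk * Real.sqrt t))
        + B * Real.exp (-c) * erf (a / Real.sqrt t - sk * Real.sqrt t))) _ t :=
      ((term1.add term2).add term3).const_mul q
    rw [hident t ht]
    have hGF : G =ᶠ[nhds t] (fun t => q * ((-(1/k) * (Real.exp (-k * t) * erf (a / Real.sqrt t))
        + A * Real.exp c * erf (a / Real.sqrt t + sk * Real.sqrt t))
        + B * Real.exp (-c) * erf (a / Real.sqrt t - sk * Real.sqrt t))) := by
      filter_upwards [isOpen_Ioi.mem_nhds (show t ∈ Ioi (0:ℝ) from ht)] with x hx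
      rw [hGdef]
      simp only [if_neg (not_le.2 (show (0:ℝ) < x from hx))]
      ring
    refine HasDerivAt.congr_of_eventuallyEq ?_ hGF
    refine final.congr_deriv ?_
    rw [hE1, hE2, Real.exp_neg c, hAdef, hBdef]
    field_simp
    ring
  have hnn : ∀ t ∈ Ioi (0:ℝ), 0 ≤
      q * (erf (R₀ / (2 * Real.sqrt (D * t)))
            - R₀ / Real.sqrt (π * D * t) * Real.exp (-R₀ ^ 2 / (4 * D * t)))
         * Real.exp (-k * t) := by
    intro t ht
    rw [Set.mem_Ioi] at ht
    rw [hident t ht]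
    have hx : 0 ≤ a / Real.sqrt t := div_nonneg ha.le (Real.sqrt_nonneg t)
    have h2 : 0 ≤ erf (a / Real.sqrt t)
        - 2 / Real.sqrt π * (a / Real.sqrt t) * Real.exp (-(a / Real.sqrt t) ^ 2) :=
      sub_nonneg.2 (erf_lower _ hx)
    exact mul_nonneg (mul_nonneg hq.le h2) (Real.exp_nonneg _)
  -- limit at infinity
  have hsqrt_top : Tendsto Real.sqrt atTop atTop := by
    apply tendsto_atTop_atTop_of_monotone (fun x y h => Real.sqrt_le_sqrt h)
    intro b
    exact ⟨(max b 0) ^ 2, by rw [Real.sqrt_sq (le_max_right b 0)]; exact le_max_left _ _⟩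
  have hu0 : Tendsto (fun t : ℝ => a / Real.sqrt t) atTop (𝓝 0) := by
    have h := (hsqrt_top.inv_tendsto_atTop).const_mul a
    simpa [div_eq_mul_inv] using h
  have hskt_top : Tendsto (fun t : ℝ => sk * Real.sqrt t) atTop atTop :=
    Tendsto.const_mul_atTop hsk hsqrt_top
  have hupv : Tendsto (fun t : ℝ => a / Real.sqrt t + sk * Real.sqrt t) atTop atTop :=
    tendsto_atTop_mono
      (fun t => le_add_of_nonneg_left (div_nonneg ha.le (Real.sqrt_nonneg t))) hskt_top
  have humv : Tendsto (fun t : ℝ => a / Real.sqrt t - sk * Real.sqrt t) atTop atBot := by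
    apply tendsto_atBot_mono' atTop
      (f₁ := fun t : ℝ => a - sk * Real.sqrt t)
      ?_ ?_
    · filter_upwards [eventually_ge_atTop (1:ℝ)] with t ht1
      have h1 : (1:ℝ) ≤ Real.sqrt t := by
        rw [show (1:ℝ) = Real.sqrt 1 by simp]; exact Real.sqrt_le_sqrt ht1
      have : a / Real.sqrt t ≤ a := div_le_self ha.le h1
      linarith
    · have h := tendsto_neg_atTop_atBot.comp hskt_top
      have h2 := tendsto_atBot_add_const_left atTop a h
      simpa [sub_eq_add_neg, Function.comp_def] using h2
  have hekt : Tendsto (fun t : ℝ => Real.exp (-k * t)) atTop (𝓝 0) := by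
    have h : Tendsto (fun t : ℝ => -k * t) atTop atBot :=
      Tendsto.const_mul_atTop_of_neg (neg_lt_zero.2 hk) tendsto_id
    exact Real.tendsto_exp_atBot.comp h
  have lerf0 : Tendsto (fun t : ℝ => erf (a / Real.sqrt t)) atTop (𝓝 (erf 0)) :=
    (continuous_erf.tendsto 0).comp hu0
  have l2 : Tendsto (fun t : ℝ => erf (a / Real.sqrt t + sk * Real.sqrt t)) atTop (𝓝 1) :=
    tendsto_erf_atTop.comp hupv
  have l3 : Tendsto (fun t : ℝ => erf (a / Real.sqrt t - sk * Real.sqrt t)) atTop (𝓝 (-1)) :=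
    tendsto_erf_atBot.comp humv
  have lf : Tendsto (fun t : ℝ => q * (-(1/k) * (Real.exp (-k * t) * erf (a / Real.sqrt t))
      + A * Real.exp c * erf (a / Real.sqrt t + sk * Real.sqrt t)
      + B * Real.exp (-c) * erf (a / Real.sqrt t - sk * Real.sqrt t))) atTop
      (𝓝 (q * (-(1/k) * (0 * erf 0) + A * Real.exp c * 1 + B * Real.exp (-c) * (-1)))) :=
    ((((hekt.mul lerf0).const_mul (-(1/k))).add (l2.const_mul (A * Real.exp c))).add
      (l3.const_mul (B * Real.exp (-c)))).const_mul q
  have htop : Tendsto G atTop (𝓝 (q * (A * Real.exp c - B * Real.exp (-c)))) := by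
    have heq : (fun t : ℝ => q * (-(1/k) * (Real.exp (-k * t) * erf (a / Real.sqrt t))
        + A * Real.exp c * erf (a / Real.sqrt t + sk * Real.sqrt t)
        + B * Real.exp (-c) * erf (a / Real.sqrt t - sk * Real.sqrt t))) =ᶠ[atTop] G := by
      filter_upwards [eventually_gt_atTop (0:ℝ)] with x hx
      rw [hGdef]
      simp only [if_neg (not_le.2 hx)]
      ring
    have hval : q * (-(1/k) * (0 * erf 0) + A * Real.exp c * 1 + B * Real.exp (-c) * (-1))
        = q * (A * Real.exp c - B * Real.exp (-c)) := by ring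
    rw [hval] at lf
    exact lf.congr' heq
  -- continuity at 0 from the right
  have hcont : ContinuousWithinAt G (Ici (0:ℝ)) 0 := by
    rw [← continuousWithinAt_Ioi_iff_Ici]
    have hG0 : G 0 = q * (-(1 / k) + A * Real.exp c + B * Real.exp (-c)) := by
      rw [hGdef]; simp
    unfold ContinuousWithinAt
    rw [hG0]
    have hsq0 : Tendsto Real.sqrt (𝓝[>] (0:ℝ)) (𝓝[>] (0:ℝ)) := by
      rw [tendsto_nhdsWithin_iff]
      constructor
      · have h := (Real.continuous_sqrt.tendsto 0).mono_left (nhdsWithin_le_nhds (s := Ioi 0))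
        simpa using h
      · filter_upwards [self_mem_nhdsWithin] with x hx
        exact Real.sqrt_pos.2 hx
    have hinv : Tendsto (fun t : ℝ => (Real.sqrt t)⁻¹) (𝓝[>] (0:ℝ)) atTop :=
      tendsto_inv_nhdsGT_zero.comp hsq0
    have hu : Tendsto (fun t : ℝ => a / Real.sqrt t) (𝓝[>] (0:ℝ)) atTop := by
      have h := Tendsto.const_mul_atTop ha hinv
      simpa [div_eq_mul_inv] using h
    have hupv0 : Tendsto (fun t : ℝ => a / Real.sqrt t + sk * Real.sqrt t)
        (𝓝[>] (0:ℝ)) atTop :=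
      tendsto_atTop_mono
        (fun t => le_add_of_nonneg_right (mul_nonneg hsk.le (Real.sqrt_nonneg t))) hu
    have humv0 : Tendsto (fun t : ℝ => a / Real.sqrt t - sk * Real.sqrt t)
        (𝓝[>] (0:ℝ)) atTop := by
      apply tendsto_atTop_mono' _ (f₁ := fun t : ℝ => a / Real.sqrt t - sk) ?_ ?_
      · filter_upwards [Ioo_mem_nhdsGT_of_mem
          (show (0:ℝ) ∈ Ico (0:ℝ) 1 from ⟨le_rfl, zero_lt_one⟩)] with t ht
        have h1 : Real.sqrt t ≤ 1 := by
          rw [show (1:ℝ) = Real.sqrt 1 by simp]; exact Real.sqrt_le_sqrt ht.2.le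
        have : sk * Real.sqrt t ≤ sk := by nlinarith
        linarith
      · have h := tendsto_atTop_add_const_right (𝓝[>] (0:ℝ)) (-sk) hu
        simpa [sub_eq_add_neg] using h
    have hek0 : Tendsto (fun t : ℝ => Real.exp (-k * t)) (𝓝[>] (0:ℝ)) (𝓝 1) := by
      have h : Tendsto (fun t : ℝ => Real.exp (-k * t)) (𝓝 (0:ℝ)) (𝓝 (Real.exp (-k * 0))) :=
        (Real.continuous_exp.comp (continuous_const.mul continuous_id)).tendsto 0
      simpa using h.mono_left (nhdsWithin_le_nhds (s := Ioi 0))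
    have le1 : Tendsto (fun t : ℝ => erf (a / Real.sqrt t)) (𝓝[>] (0:ℝ)) (𝓝 1) :=
      tendsto_erf_atTop.comp hu
    have le2 : Tendsto (fun t : ℝ => erf (a / Real.sqrt t + sk * Real.sqrt t))
        (𝓝[>] (0:ℝ)) (𝓝 1) := tendsto_erf_atTop.comp hupv0
    have le3 : Tendsto (fun t : ℝ => erf (a / Real.sqrt t - sk * Real.sqrt t))
        (𝓝[>] (0:ℝ)) (𝓝 1) := tendsto_erf_atTop.comp humv0
    have lf0 : Tendsto (fun t : ℝ => q * (-(1/k) * (Real.exp (-k * t) * erf (a / Real.sqrt t))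
        + A * Real.exp c * erf (a / Real.sqrt t + sk * Real.sqrt t)
        + B * Real.exp (-c) * erf (a / Real.sqrt t - sk * Real.sqrt t))) (𝓝[>] (0:ℝ))
        (𝓝 (q * (-(1/k) * (1 * 1) + A * Real.exp c * 1 + B * Real.exp (-c) * 1))) :=
      ((((hek0.mul le1).const_mul (-(1/k))).add (le2.const_mul (A * Real.exp c))).add
        (le3.const_mul (B * Real.exp (-c)))).const_mul q
    have hval : q * (-(1/k) * (1 * 1) + A * Real.exp c * 1 + B * Real.exp (-c) * 1)
        = q * (-(1 / k) + A * Real.exp c + B * Real.exp (-c)) := by ring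
    rw [hval] at lf0
    apply lf0.congr'
    filter_upwards [self_mem_nhdsWithin] with x hx
    rw [hGdef]
    simp only [if_neg (not_le.2 (show (0:ℝ) < x from hx))]
    ring
  have intval := integral_Ioi_of_hasDerivAt_of_nonneg hcont hderiv hnn htop
  rw [intval]
  have hG0 : G 0 = q * (-(1 / k) + A * Real.exp c + B * Real.exp (-c)) := by
    rw [hGdef]; simp
  rw [hG0]
  -- final algebra
  have hc' : Real.sqrt (k / D) * R₀ = c := by
    rw [Real.sqrt_div hk.le, hcdef, hadef, ← hskdef, ← hsDdef]
    field_simp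
  have h32 : k ^ ((3:ℝ)/2) = k * sk := by
    rw [show (3:ℝ)/2 = 1 + 1/2 by norm_num, Real.rpow_add hk, Real.rpow_one, hskdef,
      Real.sqrt_eq_rpow]
  have hDk : Real.sqrt (D * k) = sD * sk := by
    rw [Real.sqrt_mul hD.le, ← hskdef, ← hsDdef]
  rw [show -Real.sqrt (k / D) * R₀ = -c by rw [← hc']; ring, hDk, h32, hAdef, hBdef, hadef,
    Real.exp_neg c]
  have hkk : k = sk ^ 2 := (Real.sq_sqrt hk.le).symm
  have hDD : D = sD ^ 2 := (Real.sq_sqrt hD.le).symm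
  rw [hkk, hDD]
  field_simp
  ring
end

section
/- For all real numbers a ≥ 0 and k > 0, ∫₀^∞ t^{−1/2} · exp(−a²/t − k·t) dt = √(π/k) · exp(−2·a·√k). -/
open MeasureTheory Real Set

-- Step 1: t = u^2 substitution, generic
lemma sq_subst (G : ℝ → ℝ) :
    ∫ t in Ioi (0:ℝ), G t = ∫ u in Ioi (0:ℝ), |2*u| * G (u^2) := by
  have himg : (fun u : ℝ => u^2) '' Ioi 0 = Ioi 0 := by
    ext t
    constructor
    · rintro ⟨u, hu, rfl⟩
      exact mem_Ioi.mpr (pow_pos (mem_Ioi.mp hu) 2)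
    · intro ht
      exact ⟨Real.sqrt t, mem_Ioi.mpr (Real.sqrt_pos.mpr ht), Real.sq_sqrt (le_of_lt ht)⟩
  have hderiv : ∀ u ∈ Ioi (0:ℝ), HasDerivWithinAt (fun u : ℝ => u^2) (2*u) (Ioi 0) u := by
    intro u hu
    simpa using (hasDerivAt_pow 2 u).hasDerivWithinAt
  have hinj : InjOn (fun u : ℝ => u^2) (Ioi 0) := by
    intro x hx y hy h
    have hx0 := mem_Ioi.mp hx
    have hy0 := mem_Ioi.mp hy
    simp only at h
    nlinarith [sq_nonneg (x - y), sq_nonneg (x + y)]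
  have := integral_image_eq_integral_abs_deriv_smul measurableSet_Ioi hderiv hinj G
  rw [himg] at this
  simpa [smul_eq_mul] using this

-- half-line Cauchy–Schlömilch
lemma J_eq (a c : ℝ) (ha : 0 < a) (hc : 0 < c) :
    ∫ u in Ioi (0:ℝ), Real.exp (-(c*u - a/u)^2) = Real.sqrt π / (2*c) := by
  set E : ℝ → ℝ := fun u => Real.exp (-(c*u - a/u)^2) with hE
  have hderiv : ∀ u ∈ Ioi (0:ℝ), HasDerivWithinAt (fun u : ℝ => c*u - a/u) (c + a/u^2) (Ioi 0) u := by
    intro u hu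
    have hu0 : u ≠ 0 := (mem_Ioi.mp hu).ne'
    have h1 : HasDerivAt (fun u:ℝ => c*u - a*u⁻¹) (c*1 - a*(-(u^2)⁻¹)) u :=
      ((hasDerivAt_id u).const_mul c).sub ((hasDerivAt_inv hu0).const_mul a)
    have h2 : (fun u:ℝ => c*u - a/u) = fun u:ℝ => c*u - a*u⁻¹ := by
      ext v; rw [div_eq_mul_inv]
    rw [h2]
    refine h1.hasDerivWithinAt.congr_deriv ?_
    ring
  have hmono : StrictMonoOn (fun u : ℝ => c*u - a/u) (Ioi 0) := by
    intro x hx y hy hxy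
    have hx0 := mem_Ioi.mp hx
    have hy0 := mem_Ioi.mp hy
    have h1 : a/y < a/x := div_lt_div_of_pos_left ha hx0 hxy
    have h2 : c*x < c*y := by nlinarith
    simp only
    linarith
  have himg : (fun u : ℝ => c*u - a/u) '' Ioi 0 = univ := by
    refine eq_univ_of_forall fun y => ?_
    set s := Real.sqrt (y^2 + 4*a*c) with hs
    have hs2 : s^2 = y^2 + 4*a*c := Real.sq_sqrt (by positivity)
    have hsnn : 0 ≤ s := Real.sqrt_nonneg _
    have hsy : -y < s := by nlinarith [mul_pos ha hc]
    refine ⟨(y + s)/(2*c), mem_Ioi.mpr (div_pos (by linarith) (by linarith)), ?_⟩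
    have hne : y + s ≠ 0 := ne_of_gt (by linarith)
    show c * ((y + s)/(2*c)) - a / ((y + s)/(2*c)) = y
    field_simp
    nlinarith [hs2]
  -- integrability
  have hG : Integrable (fun w : ℝ => Real.exp (-w^2)) := by
    have := integrable_exp_neg_mul_sq (one_pos)
    simpa using this
  have hInt0 : IntegrableOn (fun u => |c + a/u^2| • Real.exp (-(c*u - a/u)^2)) (Ioi 0) :=
    (integrableOn_image_iff_integrableOn_abs_deriv_smul measurableSet_Ioi hderiv hmono.injOn
      (fun w : ℝ => Real.exp (-w^2))).mp (by rw [himg]; exact hG.integrableOn)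
  have habs : ∀ u ∈ Ioi (0:ℝ), |c + a/u^2| = c + a/u^2 := by
    intro u hu
    have := mem_Ioi.mp hu
    rw [abs_of_pos (by positivity)]
  have hInt : IntegrableOn (fun u => (c + a/u^2) * E u) (Ioi 0) := by
    refine hInt0.congr_fun (fun u hu => ?_) measurableSet_Ioi
    beta_reduce
    rw [habs u hu, smul_eq_mul]
  have hcont : ContinuousOn E (Ioi 0) := by
    apply Real.continuous_exp.comp_continuousOn
    apply ContinuousOn.neg
    apply ContinuousOn.pow
    exact (continuousOn_const.mul continuousOn_id).sub
      (continuousOn_const.div continuousOn_id fun x hx => (mem_Ioi.mp hx).ne')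
  have hE_int : IntegrableOn E (Ioi 0) := by
    refine Integrable.mono' (hInt.const_mul c⁻¹) (hcont.aestronglyMeasurable measurableSet_Ioi) ?_
    filter_upwards [ae_restrict_mem measurableSet_Ioi] with u hu
    have hu0 := mem_Ioi.mp hu
    have hEpos : 0 < E u := Real.exp_pos _
    have h1 : 0 ≤ a/u^2 := by positivity
    rw [Real.norm_eq_abs, abs_of_pos hEpos]
    rw [show c⁻¹ * ((c + a/u^2) * E u) = (1 + a/u^2/c) * E u by field_simp]
    have h2 : (1:ℝ) ≤ 1 + a/u^2/c := le_add_of_nonneg_right (div_nonneg h1 hc.le)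
    nlinarith [h2, hEpos]
  have hA_int : IntegrableOn (fun u => a/u^2 * E u) (Ioi 0) := by
    have h := hInt.sub (hE_int.const_mul c)
    exact h.congr (Filter.Eventually.of_forall fun u => by simp only [Pi.sub_apply]; ring)
  -- change of variables 1: whole Gaussian
  have key := integral_image_eq_integral_abs_deriv_smul measurableSet_Ioi hderiv hmono.injOn
    (fun w : ℝ => Real.exp (-w^2))
  rw [himg, setIntegral_univ] at key
  have sqrtpi : (∫ w : ℝ, Real.exp (-w^2)) = Real.sqrt π := by
    have := integral_gaussian 1
    simpa using this
  rw [sqrtpi] at key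
  have key' : Real.sqrt π = ∫ u in Ioi (0:ℝ), (c + a/u^2) * E u := by
    rw [key]
    refine setIntegral_congr_fun measurableSet_Ioi fun u hu => ?_
    rw [habs u hu, smul_eq_mul]
  -- change of variables 2: phi u = a/(c*u)
  have hφderiv : ∀ u ∈ Ioi (0:ℝ), HasDerivWithinAt (fun u : ℝ => a/c * u⁻¹) (-(a/(c*u^2))) (Ioi 0) u := by
    intro u hu
    have hu0 : u ≠ 0 := (mem_Ioi.mp hu).ne'
    have h1 : HasDerivAt (fun u:ℝ => a/c * u⁻¹) (a/c * (-(u^2)⁻¹)) u :=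
      (hasDerivAt_inv hu0).const_mul (a/c)
    refine h1.hasDerivWithinAt.congr_deriv ?_
    ring
  have hφinj : InjOn (fun u : ℝ => a/c * u⁻¹) (Ioi 0) := by
    intro x hx y hy h
    have hx0 : x ≠ 0 := (mem_Ioi.mp hx).ne'
    have hy0 : y ≠ 0 := (mem_Ioi.mp hy).ne'
    simp only at h
    field_simp at h
    exact h.symm
  have hφimg : (fun u : ℝ => a/c * u⁻¹) '' Ioi 0 = Ioi 0 := by
    ext v
    constructor
    · rintro ⟨u, hu, rfl⟩
      have := mem_Ioi.mp hu
      exact mem_Ioi.mpr (by positivity)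
    · intro hv
      have hv0 := mem_Ioi.mp hv
      refine ⟨a/(c*v), mem_Ioi.mpr (by positivity), ?_⟩
      show a/c * (a/(c*v))⁻¹ = v
      field_simp
  have key2 := integral_image_eq_integral_abs_deriv_smul measurableSet_Ioi hφderiv hφinj E
  rw [hφimg] at key2
  have key2' : (∫ u in Ioi (0:ℝ), E u) = c⁻¹ * ∫ u in Ioi (0:ℝ), a/u^2 * E u := by
    rw [key2, ← integral_const_mul]
    refine setIntegral_congr_fun measurableSet_Ioi fun u hu => ?_
    have hu0 : (0:ℝ) < u := mem_Ioi.mp hu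
    have hfe : c * (a/c * u⁻¹) - a / (a/c * u⁻¹) = -(c*u - a/u) := by
      field_simp
      ring
    rw [smul_eq_mul]
    show |(-(a/(c*u^2)))| * Real.exp (-(c * (a/c * u⁻¹) - a / (a/c * u⁻¹))^2)
        = c⁻¹ * (a/u^2 * E u)
    rw [hfe, abs_neg, abs_of_pos (by positivity), hE]
    have h3 : (-(c*u - a/u))^2 = (c*u - a/u)^2 := by ring
    rw [h3]
    ring
  -- assemble
  have hsplit : (∫ u in Ioi (0:ℝ), (c + a/u^2) * E u)
      = c * (∫ u in Ioi (0:ℝ), E u) + ∫ u in Ioi (0:ℝ), a/u^2 * E u := by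
    rw [← integral_const_mul, ← integral_add (hE_int.const_mul c) hA_int]
    refine integral_congr_ae (Filter.Eventually.of_forall fun u => ?_)
    ring
  have hAv : (∫ u in Ioi (0:ℝ), a/u^2 * E u) = c * ∫ u in Ioi (0:ℝ), E u := by
    rw [key2']
    field_simp
  have hfin : Real.sqrt π = 2 * c * ∫ u in Ioi (0:ℝ), E u := by
    rw [key', hsplit, hAv]; ring
  have hc2 : (2*c : ℝ) ≠ 0 := by positivity
  rw [eq_div_iff hc2]
  linarith [hfin]

/-- Integral identity underlying Theorem 2 and equation (B.2) of the paper. -/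
theorem integral_rpow_neg_half_exp (a k : ℝ) (ha : 0 ≤ a) (hk : 0 < k) :
    ∫ t in Ioi (0 : ℝ), t ^ (-(1 : ℝ) / 2) * Real.exp (-a ^ 2 / t - k * t)
      = Real.sqrt (π / k) * Real.exp (-2 * a * Real.sqrt k) := by
  set c := Real.sqrt k with hcdef
  have hc : 0 < c := Real.sqrt_pos.mpr hk
  have hc2 : c^2 = k := Real.sq_sqrt hk.le
  rw [sq_subst (fun t => t ^ (-(1 : ℝ) / 2) * Real.exp (-a ^ 2 / t - k * t))]
  have step1 : ∀ u ∈ Ioi (0:ℝ),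
      |2*u| * ((u^2) ^ (-(1 : ℝ) / 2) * Real.exp (-a ^ 2 / u^2 - k * u^2))
      = 2 * Real.exp (-a^2/u^2 - k*u^2) := by
    intro u hu
    have hu0 : (0:ℝ) < u := mem_Ioi.mp hu
    have habs : |2*u| = 2*u := abs_of_pos (by positivity)
    have hrpow : (u^2 : ℝ) ^ (-(1 : ℝ) / 2) = u⁻¹ := by
      rw [← Real.rpow_natCast u 2, ← Real.rpow_mul hu0.le,
        show ((2:ℕ):ℝ) * (-(1:ℝ)/2) = -1 by norm_num, Real.rpow_neg_one]
    rw [habs, hrpow]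
    field_simp
  rw [setIntegral_congr_fun measurableSet_Ioi step1]
  rcases eq_or_lt_of_le ha with rfl | ha'
  · have harg : ∀ u : ℝ, (-(0:ℝ)^2/u^2 - k*u^2) = -k*u^2 := by
      intro u; norm_num
    simp_rw [harg]
    rw [integral_const_mul, integral_gaussian_Ioi k]
    norm_num
    ring
  · have harg : ∀ u ∈ Ioi (0:ℝ), 2 * Real.exp (-a^2/u^2 - k*u^2)
        = (2 * Real.exp (-(2*a*c))) * Real.exp (-(c*u - a/u)^2) := by
      intro u hu
      have hu0 : u ≠ 0 := (mem_Ioi.mp hu).ne'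
      rw [mul_assoc, ← Real.exp_add]
      congr 2
      field_simp
      linear_combination u^2*u^2*hc2
    rw [setIntegral_congr_fun measurableSet_Ioi harg, integral_const_mul, J_eq a c ha' hc,
      Real.sqrt_div pi_pos.le k, ← hcdef,
      show (-2*a*c : ℝ) = -(2*a*c) by ring]
    field_simp
end

section
/- For all real numbers a ≥ 0 and k > 0, ∫₀^∞ t^{1/2} · exp(−a²/t − k·t) dt = (√π / (2·k^{3/2})) · (1 + 2·a·√k) · exp(−2·a·√k). -/
open MeasureTheory Real Set
open Filter Topology

lemma g_hasDerivAt {b x : ℝ} (hx : x ≠ 0) :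
    HasDerivAt (fun w : ℝ => w - b / w) (1 + b / x ^ 2) x := by
  have h2 : HasDerivAt (fun w : ℝ => w - b * w⁻¹) (1 - b * -(x ^ 2)⁻¹) x :=
    (hasDerivAt_id x).sub ((hasDerivAt_inv hx).const_mul b)
  simp only [div_eq_mul_inv]
  convert h2 using 1
  field_simp
  ring

lemma g_injOn {b : ℝ} (hb : 0 < b) : InjOn (fun w : ℝ => w - b / w) (Ioi 0) := by
  apply StrictMonoOn.injOn
  intro x hx y hy hxy
  simp only [mem_Ioi] at hx hy
  have : b / y < b / x := div_lt_div_of_pos_left hb hx hxy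
  simp only
  linarith

lemma g_image {b : ℝ} (hb : 0 < b) : (fun w : ℝ => w - b / w) '' (Ioi 0) = univ := by
  apply eq_univ_of_forall
  intro v
  set s := Real.sqrt (v ^ 2 + 4 * b) with hs
  have hs2 : s ^ 2 = v ^ 2 + 4 * b := Real.sq_sqrt (by positivity)
  have hsv : |v| < s := by
    have h4 : Real.sqrt (v ^ 2) < s := Real.sqrt_lt_sqrt (by positivity) (by linarith)
    rwa [Real.sqrt_sq_eq_abs] at h4
  have hw : 0 < (v + s) / 2 := by
    cases' abs_lt.mp hsv with h1 h2
    linarith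
  refine ⟨(v + s) / 2, hw, ?_⟩
  have hne : v + s ≠ 0 := by intro h; rw [show v + s = 2 * ((v+s)/2) by ring] at h; simp at h; linarith
  show (v + s) / 2 - b / ((v + s) / 2) = v
  rw [← sub_eq_zero]
  field_simp [hne]
  nlinarith [hs2]

lemma E_contOn {b : ℝ} : ContinuousOn (fun w : ℝ => Real.exp (-(w - b/w)^2)) (Ioi 0) := by
  have h : ContinuousOn (fun w : ℝ => w - b/w) (Ioi 0) :=
    continuousOn_id.sub (continuousOn_const.div continuousOn_id fun x hx => ne_of_gt hx)
  exact Real.continuous_exp.comp_continuousOn ((h.pow 2).neg)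

lemma E_le {b w : ℝ} (hw : 0 < w) :
    Real.exp (-(w - b/w)^2) ≤ Real.exp (2*b) * Real.exp (-1 * w^2) := by
  rw [← Real.exp_add]
  apply Real.exp_le_exp.2
  have hbw : b / w * w = b := div_mul_cancel₀ _ (ne_of_gt hw)
  nlinarith [sq_nonneg (b/w)]

lemma intE {b : ℝ} (hb : 0 < b) :
    IntegrableOn (fun w : ℝ => Real.exp (-(w - b/w)^2)) (Ioi 0) := by
  apply Integrable.mono' (g := fun w => Real.exp (2*b) * Real.exp (-1 * w^2))
    (((integrable_exp_neg_mul_sq one_pos).const_mul _).integrableOn)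
  · exact E_contOn.aestronglyMeasurable measurableSet_Ioi
  · filter_upwards [ae_restrict_mem measurableSet_Ioi] with w hw
    rw [norm_of_nonneg (Real.exp_pos _).le]
    exact E_le hw

lemma intR {b : ℝ} (hb : 0 < b) :
    IntegrableOn (fun w : ℝ => w^2 * Real.exp (-(w - b/w)^2)) (Ioi 0) := by
  apply Integrable.mono'
    (g := fun w => Real.exp (2*b) * (w ^ (2:ℝ) * Real.exp (-1 * w^2)))
    (((integrableOn_rpow_mul_exp_neg_mul_sq one_pos (by norm_num : (-1:ℝ) < 2))).const_mul _)
  · exact ((continuousOn_pow 2).mul E_contOn).aestronglyMeasurable measurableSet_Ioi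
  · filter_upwards [ae_restrict_mem measurableSet_Ioi] with w hw
    have hw' : (0:ℝ) < w := hw
    rw [norm_of_nonneg (by positivity), show ((2:ℝ)) = ((2:ℕ):ℝ) by norm_num,
      Real.rpow_natCast]
    have h1 := E_le (b := b) hw'
    nlinarith [sq_nonneg w, Real.exp_pos (-(w - b/w)^2), Real.exp_pos (2*b)]

lemma refl_deriv {b x : ℝ} (hx : x ≠ 0) :
    HasDerivAt (fun w : ℝ => b / w) (-(b / x^2)) x := by
  have h := (hasDerivAt_inv hx).const_mul b
  simp only [div_eq_mul_inv]
  exact h.congr_deriv (by ring)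

lemma refl_injOn {b : ℝ} (hb : 0 < b) : InjOn (fun w : ℝ => b / w) (Ioi 0) := by
  intro x hx y hy h
  simp only [mem_Ioi] at hx hy
  simp only at h
  rw [div_eq_div_iff (ne_of_gt hx) (ne_of_gt hy)] at h
  exact (mul_left_cancel₀ (ne_of_gt hb) h).symm

lemma refl_image {b : ℝ} (hb : 0 < b) : (fun w : ℝ => b / w) '' (Ioi 0) = Ioi 0 := by
  ext y
  constructor
  · rintro ⟨w, hw, rfl⟩
    simp only [mem_Ioi] at hw ⊢
    positivity
  · intro hy
    simp only [mem_Ioi] at hy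
    exact ⟨b / y, by simp only [mem_Ioi]; positivity, by field_simp⟩

lemma refl_eqOn {b : ℝ} (hb : 0 < b) :
    EqOn (fun x : ℝ => |(-(b / x^2))| • Real.exp (-((b/x) - b/(b/x))^2))
      (fun x : ℝ => (b / x^2) * Real.exp (-(x - b/x)^2)) (Ioi 0) := by
  intro x hx
  simp only [mem_Ioi] at hx
  have h1 : b / (b / x) = x := by field_simp
  have h2 : ((b/x) - x)^2 = (x - b/x)^2 := by ring
  simp only [h1, h2, abs_neg, abs_of_pos (by positivity : (0:ℝ) < b / x^2), smul_eq_mul]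

lemma intQ {b : ℝ} (hb : 0 < b) :
    IntegrableOn (fun w : ℝ => (b / w^2) * Real.exp (-(w - b/w)^2)) (Ioi 0) := by
  have hderiv : ∀ x ∈ Ioi (0:ℝ), HasDerivWithinAt (fun w : ℝ => b / w) (-(b / x^2)) (Ioi 0) x :=
    fun x hx => (refl_deriv (ne_of_gt hx)).hasDerivWithinAt
  have h := (integrableOn_image_iff_integrableOn_abs_deriv_smul measurableSet_Ioi hderiv
    (refl_injOn hb) (fun w : ℝ => Real.exp (-(w - b/w)^2)))
  rw [refl_image hb] at h
  exact (h.mp (intE hb)).congr_fun (refl_eqOn hb) measurableSet_Ioi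

lemma glasserA {b : ℝ} (hb : 0 < b) :
    ∫ w in Ioi (0:ℝ), (1 + b/w^2) * Real.exp (-(w - b/w)^2) = Real.sqrt π := by
  have hderiv : ∀ x ∈ Ioi (0:ℝ),
      HasDerivWithinAt (fun w : ℝ => w - b / w) (1 + b / x^2) (Ioi 0) x :=
    fun x hx => (g_hasDerivAt (ne_of_gt hx)).hasDerivWithinAt
  have h := integral_image_eq_integral_abs_deriv_smul measurableSet_Ioi hderiv (g_injOn hb)
    (fun y : ℝ => Real.exp (-y^2))
  rw [g_image hb, Measure.restrict_univ] at h
  have hg : ∫ x : ℝ, Real.exp (-x^2) = Real.sqrt π := by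
    have := integral_gaussian (1:ℝ)
    simpa using this
  rw [← hg, h]
  apply setIntegral_congr_fun measurableSet_Ioi
  intro x hx
  simp only [mem_Ioi] at hx
  simp only [smul_eq_mul]
  rw [abs_of_pos (by positivity : (0:ℝ) < 1 + b / x^2)]

lemma glasserB {b : ℝ} (hb : 0 < b) :
    ∫ w in Ioi (0:ℝ), (b/w^2) * Real.exp (-(w - b/w)^2)
      = ∫ w in Ioi (0:ℝ), Real.exp (-(w - b/w)^2) := by
  have hderiv : ∀ x ∈ Ioi (0:ℝ), HasDerivWithinAt (fun w : ℝ => b / w) (-(b / x^2)) (Ioi 0) x :=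
    fun x hx => (refl_deriv (ne_of_gt hx)).hasDerivWithinAt
  have h := integral_image_eq_integral_abs_deriv_smul measurableSet_Ioi hderiv (refl_injOn hb)
    (fun w : ℝ => Real.exp (-(w - b/w)^2))
  rw [refl_image hb] at h
  rw [h]
  exact (setIntegral_congr_fun measurableSet_Ioi (refl_eqOn hb)).symm


lemma h_deriv {b x : ℝ} (hx : 0 < x) :
    HasDerivAt (fun w : ℝ => w * Real.exp (-(w - b/w)^2))
      ((1 - 2*(x^2 - b^2/x^2)) * Real.exp (-(x - b/x)^2)) x := by
  have hgd := g_hasDerivAt (b := b) (ne_of_gt hx)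
  have hid : HasDerivAt (fun w : ℝ => -(w - b/w)^2) (-(2*(x - b/x)*(1 + b/x^2))) x := by
    have := ((hgd.pow 2).neg)
    refine this.congr_deriv ?_
    push_cast
    ring
  have hE : HasDerivAt (fun w : ℝ => Real.exp (-(w - b/w)^2))
      (Real.exp (-(x - b/x)^2) * (-(2*(x - b/x)*(1 + b/x^2)))) x := hid.exp
  have := (hasDerivAt_id x).mul hE
  refine this.congr_deriv ?_
  have hxne : x ≠ 0 := ne_of_gt hx
  simp only [id]
  field_simp
  ring

lemma ftc_zero {b : ℝ} (hb : 0 < b) :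
    ∫ w in Ioi (0:ℝ), (1 - 2*(w^2 - b^2/w^2)) * Real.exp (-(w - b/w)^2) = 0 := by
  have hint : IntegrableOn
      (fun w : ℝ => (1 - 2*(w^2 - b^2/w^2)) * Real.exp (-(w - b/w)^2)) (Ioi 0) := by
    have h1 := intE hb
    have h2 := (intR hb).const_mul (2:ℝ)
    have h3 := (intQ hb).const_mul (2*b)
    have h4 : IntegrableOn ((fun w : ℝ => Real.exp (-(w - b/w)^2))
        - (fun x : ℝ => 2 * (x^2 * Real.exp (-(x - b/x)^2)))
        + fun x : ℝ => 2*b * (b/x^2 * Real.exp (-(x - b/x)^2))) (Ioi 0) :=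
      (h1.sub h2).add h3
    apply h4.congr_fun _ measurableSet_Ioi
    intro x hx
    simp only [mem_Ioi] at hx
    have hbx : b^2/x^2 = b * (b/x^2) := by field_simp
    simp only [Pi.add_apply, Pi.sub_apply, hbx]
    ring
  have hcont : ContinuousWithinAt (fun w : ℝ => w * Real.exp (-(w - b/w)^2)) (Ici 0) 0 := by
    have key : Tendsto (fun w : ℝ => w * Real.exp (-(w - b/w)^2)) (𝓝[Ici 0] 0) (𝓝 0) := by
      apply tendsto_of_tendsto_of_tendsto_of_le_of_le' tendsto_const_nhds
        ((continuous_id.tendsto 0).mono_left nhdsWithin_le_nhds)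
      · filter_upwards [self_mem_nhdsWithin] with w hw
        have h0w : (0:ℝ) ≤ w := hw
        show (0:ℝ) ≤ w * Real.exp (-(w - b/w)^2)
        positivity
      · filter_upwards [self_mem_nhdsWithin] with w hw
        have hw0 : (0:ℝ) ≤ w := hw
        have hE1 : Real.exp (-(w - b/w)^2) ≤ 1 := Real.exp_le_one_iff.2 (neg_nonpos.mpr (sq_nonneg _))
        show w * Real.exp (-(w - b/w)^2) ≤ w
        calc w * Real.exp (-(w - b/w)^2) ≤ w * 1 := by
              apply mul_le_mul_of_nonneg_left hE1 hw0
          _ = w := mul_one w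
    have h0 : (fun w : ℝ => w * Real.exp (-(w - b/w)^2)) 0 = 0 := by simp
    unfold ContinuousWithinAt
    rw [h0]
    exact key
  have htop : Tendsto (fun w : ℝ => w * Real.exp (-(w - b/w)^2)) atTop (𝓝 0) := by
    have hlim : Tendsto (fun w : ℝ => Real.exp (2*b) * (w ^ (1:ℝ) * Real.exp (-1 * w)))
        atTop (𝓝 (Real.exp (2*b) * 0)) :=
      (tendsto_rpow_mul_exp_neg_mul_atTop_nhds_zero 1 1 one_pos).const_mul _
    rw [mul_zero] at hlim
    apply tendsto_of_tendsto_of_tendsto_of_le_of_le' tendsto_const_nhds hlim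
    · filter_upwards [eventually_ge_atTop (1:ℝ)] with w hw
      have hw0 : (0:ℝ) < w := by linarith
      show (0:ℝ) ≤ w * Real.exp (-(w - b/w)^2)
      positivity
    · filter_upwards [eventually_ge_atTop (1:ℝ)] with w hw
      have hw0 : (0:ℝ) < w := by linarith
      have h1 := E_le (b := b) hw0
      have h2 : Real.exp (-1 * w^2) ≤ Real.exp (-1 * w) := by
        apply Real.exp_le_exp.2; nlinarith
      show w * Real.exp (-(w - b/w)^2) ≤ Real.exp (2*b) * (w ^ (1:ℝ) * Real.exp (-1 * w))
      rw [Real.rpow_one]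
      calc w * Real.exp (-(w - b/w)^2) ≤ w * (Real.exp (2*b) * Real.exp (-1 * w^2)) := by
            apply mul_le_mul_of_nonneg_left h1 hw0.le
        _ ≤ w * (Real.exp (2*b) * Real.exp (-1 * w)) := by
            apply mul_le_mul_of_nonneg_left _ hw0.le
            exact mul_le_mul_of_nonneg_left h2 (Real.exp_pos _).le
        _ = Real.exp (2*b) * (w * Real.exp (-1 * w)) := by ring
  have := integral_Ioi_of_hasDerivAt_of_tendsto hcont (fun x hx => h_deriv hx) hint htop
  rw [this]
  simp

lemma glasserR {b : ℝ} (hb : 0 < b) :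
    ∫ w in Ioi (0:ℝ), w^2 * Real.exp (-(w - b/w)^2)
      = Real.sqrt π / 4 * (1 + 2*b) := by
  set P := ∫ w in Ioi (0:ℝ), Real.exp (-(w - b/w)^2) with hP
  set Q := ∫ w in Ioi (0:ℝ), (b/w^2) * Real.exp (-(w - b/w)^2) with hQ
  set R := ∫ w in Ioi (0:ℝ), w^2 * Real.exp (-(w - b/w)^2) with hR
  have hsplitA : P + Q = Real.sqrt π := by
    rw [hP, hQ, ← integral_add (intE hb) (intQ hb), ← glasserA hb]
    apply setIntegral_congr_fun measurableSet_Ioi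
    intro x hx
    ring
  have hB : Q = P := glasserB hb
  have hPval : P = Real.sqrt π / 2 := by rw [hB] at hsplitA; linarith
  have hQval : Q = Real.sqrt π / 2 := by rw [hB, hPval]
  have hfg : Integrable (fun w : ℝ => Real.exp (-(w - b/w)^2)
      - 2*(w^2 * Real.exp (-(w - b/w)^2))) (volume.restrict (Ioi 0)) :=
    (intE hb).sub ((intR hb).const_mul 2)
  have hh : Integrable (fun w : ℝ => 2*b*((b/w^2) * Real.exp (-(w - b/w)^2)))
      (volume.restrict (Ioi 0)) := (intQ hb).const_mul (2*b)
  have e1 : ∫ w in Ioi (0:ℝ), (1 - 2*(w^2 - b^2/w^2)) * Real.exp (-(w - b/w)^2)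
      = ∫ w in Ioi (0:ℝ), (Real.exp (-(w - b/w)^2)
        - 2*(w^2 * Real.exp (-(w - b/w)^2)) + 2*b*((b/w^2) * Real.exp (-(w - b/w)^2))) := by
    apply setIntegral_congr_fun measurableSet_Ioi
    intro x hx
    simp only [mem_Ioi] at hx
    have hbx : b^2/x^2 = b * (b/x^2) := by field_simp
    show (1 - 2*(x^2 - b^2/x^2)) * Real.exp (-(x - b/x)^2) = _
    rw [hbx]
    ring
  have hsplitF : P - 2*R + 2*b*Q = 0 := by
    have e2 : ∫ w in Ioi (0:ℝ), (Real.exp (-(w - b/w)^2)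
        - 2*(w^2 * Real.exp (-(w - b/w)^2)) + 2*b*((b/w^2) * Real.exp (-(w - b/w)^2)))
        = P - 2*R + 2*b*Q := by
      rw [integral_add hfg hh, integral_sub (intE hb) ((intR hb).const_mul 2),
        integral_const_mul, integral_const_mul]
    rw [← e2, ← e1, ftc_zero hb]
  rw [hPval, hQval] at hsplitF
  linarith [hsplitF]


/-- Integral identity underlying equation (B.2) of the paper. -/
theorem integral_rpow_half_exp (a k : ℝ) (ha : 0 ≤ a) (hk : 0 < k) :
    ∫ t in Ioi (0 : ℝ), t ^ ((1 : ℝ) / 2) * Real.exp (-a ^ 2 / t - k * t)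
      = Real.sqrt π / (2 * k ^ ((3 : ℝ) / 2)) * (1 + 2 * a * Real.sqrt k) *
          Real.exp (-2 * a * Real.sqrt k) := by
  have hk32 : k ^ ((3:ℝ)/2) = k * Real.sqrt k := by
    rw [show (3:ℝ)/2 = 1 + 1/2 by norm_num, Real.rpow_add hk, Real.rpow_one,
      ← Real.sqrt_eq_rpow]
  rcases eq_or_lt_of_le ha with rfl | ha'
  · -- a = 0
    have hG : Real.Gamma (3/2 : ℝ) = Real.sqrt π / 2 := by
      rw [show (3:ℝ)/2 = 1/2 + 1 by norm_num, Real.Gamma_add_one (by norm_num),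
        Real.Gamma_one_half_eq]
      ring
    have h1 : ∫ t in Ioi (0:ℝ), t ^ ((1:ℝ)/2) * Real.exp (-(0:ℝ) ^ 2 / t - k * t)
        = ∫ t in Ioi (0:ℝ), t ^ ((3:ℝ)/2 - 1) * Real.exp (-(k * t)) := by
      apply setIntegral_congr_fun measurableSet_Ioi
      intro t ht
      show t ^ ((1:ℝ)/2) * Real.exp (-(0:ℝ) ^ 2 / t - k * t)
        = t ^ ((3:ℝ)/2 - 1) * Real.exp (-(k * t))
      have he : -(0:ℝ) ^ 2 / t - k * t = -(k * t) := by simp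
      rw [he, show (3:ℝ)/2 - 1 = 1/2 by norm_num]
    rw [h1, integral_rpow_mul_exp_neg_mul_Ioi (by norm_num : (0:ℝ) < 3/2) hk, hG,
      Real.div_rpow zero_le_one hk.le, Real.one_rpow, hk32]
    have hsk : (0:ℝ) < Real.sqrt k := Real.sqrt_pos.mpr hk
    rw [show (2:ℝ) * 0 * Real.sqrt k = 0 by ring, show (-2:ℝ) * 0 * Real.sqrt k = 0 by ring,
      Real.exp_zero]
    ring
  · -- a > 0
    set b := a * Real.sqrt k with hbdef
    have hsk : (0:ℝ) < Real.sqrt k := Real.sqrt_pos.mpr hk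
    have hb : 0 < b := by positivity
    have hb2 : b ^ 2 = a ^ 2 * k := by
      rw [hbdef, mul_pow, Real.sq_sqrt hk.le]
    have hderiv : ∀ x ∈ Ioi (0:ℝ),
        HasDerivWithinAt (fun w : ℝ => w ^ 2 / k) (2 * x / k) (Ioi 0) x := by
      intro x hx
      have h := (hasDerivAt_pow 2 x).div_const k
      have : ((2:ℕ):ℝ) * x ^ (2-1) / k = 2 * x / k := by norm_num
      rw [this] at h
      exact h.hasDerivWithinAt
    have hinj : InjOn (fun w : ℝ => w ^ 2 / k) (Ioi 0) := by
      apply StrictMonoOn.injOn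
      intro x hx y hy hxy
      simp only [mem_Ioi] at hx hy
      have : x ^ 2 < y ^ 2 := by nlinarith
      exact div_lt_div_of_pos_right this hk
    have himg : (fun w : ℝ => w ^ 2 / k) '' (Ioi 0) = Ioi 0 := by
      ext y
      constructor
      · rintro ⟨w, hw, rfl⟩
        simp only [mem_Ioi] at hw ⊢
        positivity
      · intro hy
        simp only [mem_Ioi] at hy
        refine ⟨Real.sqrt (k * y), ?_, ?_⟩
        · simp only [mem_Ioi]
          exact Real.sqrt_pos.mpr (by positivity)
        · simp only
          rw [Real.sq_sqrt (by positivity : (0:ℝ) ≤ k * y)]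
          field_simp
    have h := integral_image_eq_integral_abs_deriv_smul measurableSet_Ioi hderiv hinj
      (fun t : ℝ => t ^ ((1:ℝ)/2) * Real.exp (-a ^ 2 / t - k * t))
    rw [himg] at h
    rw [h]
    have h2 : ∫ w in Ioi (0:ℝ), |2 * w / k| •
        ((w ^ 2 / k) ^ ((1:ℝ)/2) * Real.exp (-a ^ 2 / (w ^ 2 / k) - k * (w ^ 2 / k)))
        = ∫ w in Ioi (0:ℝ), (2 / (k * Real.sqrt k) * Real.exp (-(2*b)))
          * (w ^ 2 * Real.exp (-(w - b/w) ^ 2)) := by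
      apply setIntegral_congr_fun measurableSet_Ioi
      intro w hw
      simp only [mem_Ioi] at hw
      have habs : |2 * w / k| = 2 * w / k := abs_of_pos (by positivity)
      have hsq : (w ^ 2 / k) ^ ((1:ℝ)/2) = w / Real.sqrt k := by
        rw [← Real.sqrt_eq_rpow, Real.sqrt_div (sq_nonneg w) k, Real.sqrt_sq hw.le]
      have hL : -a ^ 2 / (w ^ 2 / k) - k * (w ^ 2 / k) = -(b ^ 2 / w ^ 2) - w ^ 2 := by
        rw [hb2]
        field_simp
      have hR : -(w - b/w) ^ 2 + -(2*b) = -(b ^ 2 / w ^ 2) - w ^ 2 := by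
        field_simp
        ring
      simp only [smul_eq_mul]
      rw [habs, hsq, hL.trans hR.symm, Real.exp_add]
      ring
    rw [h2, integral_const_mul, glasserR hb]
    rw [hk32, show (-2) * a * Real.sqrt k = -(2*b) by rw [hbdef]; ring, hbdef]
    ring
end
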